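/- Let A be a set with mul : A → A → Option A satisfying (Surj): for every c there exist a, b with mul a b = some c; (C): mul a b = mul b a; and (A): (mul a b).bind (fun w => mul w c) = (mul b c).bind (fun v => mul a v). Then axiom (F) — for all a, b, c, d: (∃ e, mul a b = some e ∧ mul c d = some e) ↔ (∃ b₁, mul b₁ d = some b ∧ mul a b₁ = some c) — holds if and only if axiom (H) holds: there exists star : A → A such that for all a, b, c, mul (star a) b = some c ↔ mul a c = some b. (In Rel, Frobenius algebras satisfy (H), and (F) and (H) are equivalent in the presence of the other axioms.) -/

import Mathlib

/-- In Rel, in the presence of (Surj)=(M), (C) and (A), the Frobenius law (F)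
is equivalent to the H*-algebra axiom (H). -/
theorem rel_F_iff_H {A : Type*} (mul : A → A → Option A)
    (hSurj : ∀ c : A, ∃ a b : A, mul a b = some c)
    (hC : ∀ a b : A, mul a b = mul b a)
    (hA : ∀ a b c : A,
      (mul a b).bind (fun w => mul w c) = (mul b c).bind (fun v => mul a v)) :
    (∀ a b c d : A,
      (∃ e, mul a b = some e ∧ mul c d = some e) ↔
      (∃ b₁, mul b₁ d = some b ∧ mul a b₁ = some c)) ↔
    (∃ star : A → A, ∀ a b c : A, mul (star a) b = some c ↔ mul a c = some b) := by
  constructor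
  · intro F
    -- every element has a local unit
    have unit_ex : ∀ a : A, ∃ u, mul a u = some a := by
      intro a
      obtain ⟨x, y, hxy⟩ := hSurj a
      obtain ⟨u, huy, hxu⟩ := (F x y x y).mp ⟨a, hxy, hxy⟩
      have h := hA x y u
      rw [hxy, hC y u, huy] at h
      simp only [Option.bind_some] at h
      rw [hxy] at h
      exact ⟨u, h⟩
    -- local units are unique
    have uniq : ∀ a u u' : A, mul a u = some a → mul a u' = some a → u = u' := by
      intro a u u' hu hu'
      obtain ⟨t, ht, -⟩ := (F a u u a).mp ⟨a, hu, by rw [hC]; exact hu⟩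
      obtain ⟨t', ht', -⟩ := (F a u' u' a).mp ⟨a, hu', by rw [hC]; exact hu'⟩
      have h1 := hA t a u'
      rw [ht, hu'] at h1
      simp only [Option.bind_some] at h1
      rw [ht] at h1
      have h2 := hA t' a u
      rw [ht', hu] at h2
      simp only [Option.bind_some] at h2
      rw [ht'] at h2
      rw [hC] at h1
      rw [h2] at h1
      exact (Option.some_injective _ h1).symm
    choose u hu using unit_ex
    have star_ex : ∀ a : A, ∃ t, mul t a = some (u a) ∧ mul a t = some (u a) :=
      fun a => (F a (u a) (u a) a).mp ⟨a, hu a, by rw [hC]; exact hu a⟩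
    choose s hs1 hs2 using star_ex
    refine ⟨s, fun a b c => ?_⟩
    constructor
    · intro h
      -- u a is a unit for s a
      obtain ⟨u₃, hu₃a, hsu₃⟩ := (F (s a) a (s a) a).mp ⟨u a, hs1 a, hs1 a⟩
      have hu₃ : u₃ = u a :=
        uniq a u₃ (u a) (by rw [hC]; exact hu₃a) (hu a)
      rw [hu₃] at hsu₃
      -- u a is a unit for b
      obtain ⟨u₂, hu₂b, hsu₂⟩ := (F (s a) b (s a) b).mp ⟨c, h, h⟩
      have hu₂ : u₂ = u a := uniq (s a) u₂ (u a) hsu₂ hsu₃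
      rw [hu₂] at hu₂b
      have key := hA a (s a) b
      rw [hs2 a, h] at key
      simp only [Option.bind_some] at key
      rw [hu₂b] at key
      exact key.symm
    · intro h
      obtain ⟨u₄, hu₄c, hau₄⟩ := (F a c a c).mp ⟨b, h, h⟩
      have hu₄ : u₄ = u a := uniq a u₄ (u a) hau₄ (hu a)
      rw [hu₄] at hu₄c
      have key := hA (s a) a c
      rw [hs1 a, h] at key
      simp only [Option.bind_some] at key
      rw [hu₄c] at key
      exact key.symm
  · rintro ⟨st, hst⟩ a b c d
    constructor
    · rintro ⟨e, hab, hcd⟩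
      have hsae : mul (st a) e = some b := (hst a e b).mpr hab
      have key := hA (st a) c d
      rw [hcd] at key
      simp only [Option.bind_some] at key
      rw [hsae] at key
      obtain ⟨b₁, hb₁, hbd⟩ : ∃ b₁, mul (st a) c = some b₁ ∧ mul b₁ d = some b := by
        cases h' : mul (st a) c with
        | none => rw [h'] at key; simp at key
        | some b₁ =>
          rw [h'] at key
          simp only [Option.bind_some] at key
          exact ⟨b₁, rfl, key⟩
      exact ⟨b₁, hbd, (hst a c b₁).mp hb₁⟩
    · rintro ⟨b₁, hb₁d, hab₁⟩
      have hsac : mul (st a) c = some b₁ := (hst a c b₁).mpr hab₁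
      have key := hA (st a) c d
      rw [hsac] at key
      simp only [Option.bind_some] at key
      rw [hb₁d] at key
      obtain ⟨e, hcd⟩ : ∃ e, mul c d = some e := by
        cases h' : mul c d with
        | none => rw [h'] at key; simp at key
        | some e => exact ⟨e, rfl⟩
      rw [hcd] at key
      simp only [Option.bind_some] at key
      exact ⟨e, (hst a e b).mp key.symm, hcd⟩
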